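/- Let $M$ be a $3\times 3$ matrix with rational entries, let $\lambda$ be a real number, and let $\alpha, \beta$ be real numbers such that $M \cdot (1, \alpha, \beta)^T = \lambda (1, \alpha, \beta)^T$ (viewing $M$ as a real matrix). Suppose moreover that the real eigenspace $\ker(M - \lambda I) \subseteq \mathbb{R}^3$ is one-dimensional. Then the $\mathbb{Q}$-subalgebra $\mathbb{Q}[\alpha, \beta]$ of $\mathbb{R}$ has dimension at most $3$ as a $\mathbb{Q}$-vector space; in particular $\alpha$ and $\beta$ are algebraic numbers of degree at most $3$. -/

import Mathlib

open Polynomial Matrix IntermediateField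

lemma my_eval_charpoly {n : Type*} [Fintype n] [DecidableEq n] {R : Type*} [CommRing R]
    (A : Matrix n n R) (r : R) : A.charpoly.eval r = (r • (1 : Matrix n n R) - A).det := by
  rw [Matrix.charpoly, ← Polynomial.coe_evalRingHom, RingHom.map_det]
  congr 1
  ext i j
  by_cases h : i = j <;>
    simp [h, Matrix.charmatrix_apply, Matrix.one_apply, Matrix.diagonal_apply]

theorem eigenvector_coords_cubic (M : Matrix (Fin 3) (Fin 3) ℚ) (lam α β : ℝ)
    (heig : (M.map ((↑) : ℚ → ℝ)).mulVec ![1, α, β] = lam • ![1, α, β])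
    (hdim : Module.finrank ℝ
      (LinearMap.ker (Matrix.mulVecLin
        (M.map ((↑) : ℚ → ℝ) - lam • (1 : Matrix (Fin 3) (Fin 3) ℝ)))) = 1) :
    Module.rank ℚ (Algebra.adjoin ℚ ({α, β} : Set ℝ)) ≤ 3 ∧
    IsAlgebraic ℚ α ∧ (minpoly ℚ α).natDegree ≤ 3 ∧
    IsAlgebraic ℚ β ∧ (minpoly ℚ β).natDegree ≤ 3 := by
  set A : Matrix (Fin 3) (Fin 3) ℝ := M.map ((↑) : ℚ → ℝ) - lam • (1 : Matrix (Fin 3) (Fin 3) ℝ)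
    with hAdef
  -- the vector `![1, α, β]` is in the kernel of `A`
  have hw0 : A.mulVec ![1, α, β] = 0 := by
    rw [hAdef, Matrix.sub_mulVec, heig, Matrix.smul_mulVec, Matrix.one_mulVec, sub_self]
  have hwne : (![1, α, β] : Fin 3 → ℝ) ≠ 0 := fun h => by
    have := congrFun h 0; simp at this
  have hwmem : (![1, α, β] : Fin 3 → ℝ) ∈ LinearMap.ker A.mulVecLin := by
    simpa using hw0
  -- every kernel element is a multiple of `![1, α, β]`
  have hker : ∀ v : Fin 3 → ℝ, A.mulVec v = 0 → ∃ c : ℝ, v = c • ![1, α, β] := by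
    intro v hv
    have hvmem : v ∈ LinearMap.ker A.mulVecLin := by simpa using hv
    obtain ⟨c, hc⟩ := (finrank_eq_one_iff_of_nonzero'
      (⟨_, hwmem⟩ : LinearMap.ker A.mulVecLin)
      (by simpa using hwne)).mp hdim ⟨v, hvmem⟩
    exact ⟨c, by simpa using congrArg Subtype.val hc.symm⟩
  -- the three row equations
  have hrow : ∀ i, A i 0 + A i 1 * α + A i 2 * β = 0 := by
    intro i
    have h := congrFun hw0 i
    simp [Matrix.mulVec, dotProduct, Fin.sum_univ_three] at h
    linarith
  -- some 2×2 minor in columns 1, 2 is nonzero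
  have hminor : ∃ i j : Fin 3, A i 1 * A j 2 - A i 2 * A j 1 ≠ 0 := by
    by_contra h
    push_neg at h
    by_cases hc : ∀ i, A i 1 = 0
    · have hu : A.mulVec ![0, 1, 0] = 0 := by
        ext i; simp [Matrix.mulVec, dotProduct, Fin.sum_univ_three, hc i]
      obtain ⟨c, hc'⟩ := hker _ hu
      have h0 := congrFun hc' 0
      have h1 := congrFun hc' 1
      simp at h0 h1
      rw [← h0] at h1
      simp at h1
    · push_neg at hc
      obtain ⟨k, hk⟩ := hc
      have hu : A.mulVec ![0, A k 2, -(A k 1)] = 0 := by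
        ext i
        simp [Matrix.mulVec, dotProduct, Fin.sum_univ_three]
        linear_combination (h i k)
      obtain ⟨c, hc'⟩ := hker _ hu
      have h0 := congrFun hc' 0
      have h2 := congrFun hc' 2
      simp at h0 h2
      rw [← h0] at h2
      simp at h2
      exact hk h2
  obtain ⟨i, j, hΔ⟩ := hminor
  -- `lam` is algebraic of degree at most 3 over ℚ
  have hdet : A.det = 0 := (Matrix.exists_mulVec_eq_zero_iff).mp ⟨_, hwne, hw0⟩
  have hfun : ((↑) : ℚ → ℝ) = ⇑(algebraMap ℚ ℝ) := funext fun q => (eq_ratCast _ q).symm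
  have hmapeq : M.map ((↑) : ℚ → ℝ) = M.map (algebraMap ℚ ℝ) := by rw [hfun]
  have haev : Polynomial.aeval lam M.charpoly = 0 := by
    rw [Polynomial.aeval_def, ← Polynomial.eval_map, ← Matrix.charpoly_map,
      my_eval_charpoly]
    rw [hAdef, hmapeq] at hdet
    have hneg : lam • (1 : Matrix (Fin 3) (Fin 3) ℝ) - M.map (algebraMap ℚ ℝ) =
        -(M.map (algebraMap ℚ ℝ) - lam • (1 : Matrix (Fin 3) (Fin 3) ℝ)) := by rw [neg_sub]
    rw [hneg, Matrix.det_neg, hdet]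
    simp
  have hint : IsIntegral ℚ lam := ⟨M.charpoly, M.charpoly_monic, haev⟩
  have hdeg : (minpoly ℚ lam).natDegree ≤ 3 := by
    have h := Polynomial.natDegree_le_of_dvd (minpoly.dvd ℚ lam haev) M.charpoly_monic.ne_zero
    rwa [Matrix.charpoly_natDegree_eq_dim, Fintype.card_fin] at h
  -- the field `ℚ(lam)`
  set K : IntermediateField ℚ ℝ := ℚ⟮lam⟯ with hK
  haveI : FiniteDimensional ℚ K := IntermediateField.adjoin.finiteDimensional hint
  have hfr : Module.finrank ℚ K ≤ 3 := by
    rw [hK, IntermediateField.adjoin.finrank hint]; exact hdeg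
  have hlamK : lam ∈ K := IntermediateField.mem_adjoin_simple_self ℚ lam
  have hAK : ∀ a b, A a b ∈ K := by
    intro a b
    rw [hAdef]
    refine sub_mem ?_ (mul_mem hlamK ?_)
    · show ((M a b : ℝ)) ∈ K
      exact_mod_cast SubfieldClass.ratCast_mem K (M a b)
    · by_cases h : a = b <;> simp [Matrix.one_apply, h, one_mem, zero_mem]
  -- `α` and `β` lie in `K` by Cramer's rule
  have hαK : α ∈ K := by
    have hval : α = (A j 0 * A i 2 - A i 0 * A j 2) / (A i 1 * A j 2 - A i 2 * A j 1) := by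
      rw [eq_div_iff hΔ]
      linear_combination (A j 2) * hrow i - (A i 2) * hrow j
    rw [hval]
    exact div_mem (sub_mem (mul_mem (hAK _ _) (hAK _ _)) (mul_mem (hAK _ _) (hAK _ _)))
      (sub_mem (mul_mem (hAK _ _) (hAK _ _)) (mul_mem (hAK _ _) (hAK _ _)))
  have hβK : β ∈ K := by
    have hval : β = (A i 0 * A j 1 - A j 0 * A i 1) / (A i 1 * A j 2 - A i 2 * A j 1) := by
      rw [eq_div_iff hΔ]
      linear_combination (A i 1) * hrow j - (A j 1) * hrow i
    rw [hval]
    exact div_mem (sub_mem (mul_mem (hAK _ _) (hAK _ _)) (mul_mem (hAK _ _) (hAK _ _)))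
      (sub_mem (mul_mem (hAK _ _) (hAK _ _)) (mul_mem (hAK _ _) (hAK _ _)))
  -- elements of `K` are algebraic of degree at most 3
  have key : ∀ x : ℝ, x ∈ K → IsAlgebraic ℚ x ∧ (minpoly ℚ x).natDegree ≤ 3 := by
    intro x hx
    have hxi : IsIntegral ℚ (⟨x, hx⟩ : K) := IsIntegral.of_finite ℚ _
    have hmp : minpoly ℚ x = minpoly ℚ (⟨x, hx⟩ : K) := by
      have := minpoly.algebraMap_eq (A := ℚ) (algebraMap K ℝ).injective (⟨x, hx⟩ : K)
      simpa using this
    refine ⟨?_, ?_⟩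
    · have hxint : IsIntegral ℚ x := by
        have := hxi.algebraMap (B := ℝ)
        simpa using this
      exact hxint.isAlgebraic
    · rw [hmp]
      exact le_trans (minpoly.natDegree_le _) hfr
  have hsub : Algebra.adjoin ℚ ({α, β} : Set ℝ) ≤ K.toSubalgebra := by
    apply Algebra.adjoin_le
    rintro x hx
    rcases hx with rfl | rfl
    · exact hαK
    · exact hβK
  refine ⟨?_, (key α hαK).1, (key α hαK).2, (key β hβK).1, (key β hβK).2⟩
  have h1 : Module.rank ℚ (Algebra.adjoin ℚ ({α, β} : Set ℝ)) ≤ Module.rank ℚ K :=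
    Submodule.rank_mono (Subalgebra.toSubmodule.monotone hsub)
  have h2 : Module.rank ℚ K = (Module.finrank ℚ K : Cardinal) :=
    (Module.finrank_eq_rank ℚ K).symm
  calc Module.rank ℚ (Algebra.adjoin ℚ ({α, β} : Set ℝ)) ≤ Module.rank ℚ K := h1
    _ = (Module.finrank ℚ K : Cardinal) := h2
    _ ≤ (3 : ℕ) := Nat.cast_le.mpr hfr
    _ = 3 := by norm_num
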